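/- Let x ∈ ℝ^m have support N := {i : x_i ≠ 0}, let T ⊆ {1,…,m}, Δ := N \ T, Δ_e := T \ N, and y = A x + w with ‖w‖₂ ≤ ε. Assume |N| ≤ S_N, |Δ_e| ≤ S_{Δe}, |Δ| ≤ S_Δ, and that some δ < (√2 − 1)/2 is an (S_N + S_{Δe} + S_Δ)-restricted isometry bound for A. Let x̂ be a modified-CS estimate with known part T from y and let α ≥ 0. (1) If b₁ > α + 8.79ε, then every i ∈ N with |x_i| ≥ b₁ satisfies |x̂_i| > α, i.e., all such elements are detected by the threshold-α support estimate. (2) If α ≥ 8.79ε, then |x̂_i| ≤ α for every i ∉ N; in particular there are no false additions and every element of Δ_e is deleted by the threshold-α support estimate. -/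

import Mathlib

open Finset

attribute [local instance] Classical.propDecidable

/-- Euclidean (ℓ2) norm of a finite real vector. -/
noncomputable def norm2 {k : ℕ} (v : Fin k → ℝ) : ℝ := Real.sqrt (∑ i, v i ^ 2)

/-- ℓ∞ norm (maximum absolute entry) of a finite real vector. -/
noncomputable def normInf {k : ℕ} (v : Fin k → ℝ) : ℝ := ⨆ i, |v i|

/-- Support of a vector, as a finset. -/
noncomputable def spt {k : ℕ} (v : Fin k → ℝ) : Finset (Fin k) :=
  Finset.univ.filter (fun i => v i ≠ 0)

/-- Restriction of a vector to the coordinates indexed by `T` (zero elsewhere). -/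
noncomputable def restr {k : ℕ} (T : Finset (Fin k)) (v : Fin k → ℝ) : Fin k → ℝ :=
  fun i => if i ∈ T then v i else 0

/-- `δ ∈ [0,1)` is an `S`-restricted isometry bound for `A`:
`(1-δ)‖z‖² ≤ ‖Az‖² ≤ (1+δ)‖z‖²` for every `z` with at most `S` nonzero entries. -/
def RIPBound {n m : ℕ} (A : Matrix (Fin n) (Fin m) ℝ) (S : ℕ) (δ : ℝ) : Prop :=
  0 ≤ δ ∧ δ < 1 ∧
    ∀ z : Fin m → ℝ, (spt z).card ≤ S →
      (1 - δ) * (∑ i, z i ^ 2) ≤ (∑ j, (A.mulVec z) j ^ 2) ∧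
      (∑ j, (A.mulVec z) j ^ 2) ≤ (1 + δ) * (∑ i, z i ^ 2)

/-- `θ ≥ 0` is an `(S,S')`-restricted orthogonality bound for `A`:
`|⟨Az, Az'⟩| ≤ θ‖z‖‖z'‖` for all `z, z'` with disjoint supports of cardinalities `≤ S, S'`. -/
def ROBound {n m : ℕ} (A : Matrix (Fin n) (Fin m) ℝ) (S S' : ℕ) (θ : ℝ) : Prop :=
  0 ≤ θ ∧
    ∀ z z' : Fin m → ℝ, Disjoint (spt z) (spt z') →
      (spt z).card ≤ S → (spt z').card ≤ S' →
      |∑ j, (A.mulVec z) j * (A.mulVec z') j| ≤ θ * norm2 z * norm2 z'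

/-- A modified-CS estimate with known part `T`: feasible and with minimal ℓ1 norm outside `T`
among all feasible vectors. -/
def ModCS {n m : ℕ} (A : Matrix (Fin n) (Fin m) ℝ) (y : Fin n → ℝ) (ε : ℝ)
    (T : Finset (Fin m)) (xhat : Fin m → ℝ) : Prop :=
  norm2 (fun j => y j - (A.mulVec xhat) j) ≤ ε ∧
    ∀ β : Fin m → ℝ, norm2 (fun j => y j - (A.mulVec β) j) ≤ ε →
      ∑ i ∈ Tᶜ, |xhat i| ≤ ∑ i ∈ Tᶜ, |β i|

/-- The LS estimate on `T` from `y`: supported on `T` and satisfying the normal equations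
`A_Tᵀ (y - A x̂) = 0` (equivalently `x̂_T = (A_Tᵀ A_T)⁻¹ A_Tᵀ y` when `A_T` has
full column rank). -/
def IsLS {n m : ℕ} (A : Matrix (Fin n) (Fin m) ℝ) (y : Fin n → ℝ)
    (T : Finset (Fin m)) (xhat : Fin m → ℝ) : Prop :=
  (∀ i, i ∉ T → xhat i = 0) ∧
    ∀ i ∈ T, (∑ j, A j i * (y j - (A.mulVec xhat) j)) = 0

/-- `C₁(δ) = 4√(1+δ)/(1-(√2+1)δ)`. -/
noncomputable def C1 (δ : ℝ) : ℝ := 4 * Real.sqrt (1 + δ) / (1 - (Real.sqrt 2 + 1) * δ)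

/-- `C₂(δ) = 2(1+(√2-1)δ)/(1-(√2+1)δ)`. -/
noncomputable def C2 (δ : ℝ) : ℝ := 2 * (1 + (Real.sqrt 2 - 1) * δ) / (1 - (Real.sqrt 2 + 1) * δ)

namespace ModAux

lemma norm2_nonneg {k : ℕ} (v : Fin k → ℝ) : 0 ≤ norm2 v := Real.sqrt_nonneg _

lemma sq_norm2 {k : ℕ} (v : Fin k → ℝ) : norm2 v ^ 2 = ∑ i, v i ^ 2 :=
  Real.sq_sqrt (Finset.sum_nonneg fun _ _ => sq_nonneg _)

lemma norm2_le_of_sq_le {k : ℕ} {v : Fin k → ℝ} {a : ℝ} (ha : 0 ≤ a)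
    (h : ∑ i, v i ^ 2 ≤ a ^ 2) : norm2 v ≤ a := by
  have := Real.sqrt_le_sqrt h
  rwa [Real.sqrt_sq ha] at this

lemma norm2_expand_add {k : ℕ} (u v : Fin k → ℝ) :
    ∑ i, (u i + v i) ^ 2 = (∑ i, u i ^ 2) + (∑ i, v i ^ 2) + 2 * ∑ i, u i * v i := by
  rw [Finset.mul_sum, ← Finset.sum_add_distrib, ← Finset.sum_add_distrib]
  exact Finset.sum_congr rfl fun i _ => by ring

lemma norm2_add_le {k : ℕ} (u v : Fin k → ℝ) :
    norm2 (fun i => u i + v i) ≤ norm2 u + norm2 v := by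
  apply norm2_le_of_sq_le (add_nonneg (norm2_nonneg u) (norm2_nonneg v))
  have cs := Real.sum_mul_le_sqrt_mul_sqrt Finset.univ u v
  have h1 := sq_norm2 u
  have h2 := sq_norm2 v
  have h3 := norm2_expand_add u v
  unfold norm2 at *
  nlinarith [Real.sqrt_nonneg (∑ i, u i ^ 2), Real.sqrt_nonneg (∑ i, v i ^ 2)]

lemma spt_subset {k : ℕ} {v : Fin k → ℝ} {s : Finset (Fin k)}
    (h : ∀ i, i ∉ s → v i = 0) : spt v ⊆ s := by
  intro i hi
  simp only [spt, Finset.mem_filter] at hi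
  by_contra hc
  exact hi.2 (h i hc)

lemma spt_restr {k : ℕ} (s : Finset (Fin k)) (v : Fin k → ℝ) : spt (restr s v) ⊆ s :=
  spt_subset fun i hi => by simp [restr, hi]

lemma mem_spt {k : ℕ} {v : Fin k → ℝ} {i : Fin k} : i ∈ spt v ↔ v i ≠ 0 := by
  simp [spt]

/-- restricted orthogonality, unnormalized -/
lemma ro_aux {n m S : ℕ} {A : Matrix (Fin n) (Fin m) ℝ} {δ : ℝ}
    (h : RIPBound A S δ) {z z' : Fin m → ℝ}
    (hd : Disjoint (spt z) (spt z')) (hc : (spt z).card + (spt z').card ≤ S) :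
    |∑ j, (A.mulVec z) j * (A.mulVec z') j| ≤ δ * ((∑ i, z i ^ 2) + ∑ i, z' i ^ 2) / 2 := by
  obtain ⟨hδ0, hδ1, hrip⟩ := h
  have hzz : ∀ i, z i * z' i = 0 := by
    intro i
    by_contra hcon
    have h1 : z i ≠ 0 := fun e => hcon (by simp [e])
    have h2 : z' i ≠ 0 := fun e => hcon (by simp [e])
    exact (Finset.disjoint_left.mp hd (mem_spt.mpr h1)) (mem_spt.mpr h2)
  have hsum0 : ∑ i, z i * z' i = 0 := Finset.sum_eq_zero fun i _ => hzz i
  have hcp : (spt (z + z')).card ≤ S := by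
    refine le_trans (Finset.card_le_card ?_) (le_trans (Finset.card_union_le _ _) hc)
    apply spt_subset
    intro i hi
    simp only [Finset.mem_union, mem_spt, not_or, not_not] at hi
    simp [Pi.add_apply, hi.1, hi.2]
  have hcm : (spt (z - z')).card ≤ S := by
    refine le_trans (Finset.card_le_card ?_) (le_trans (Finset.card_union_le _ _) hc)
    apply spt_subset
    intro i hi
    simp only [Finset.mem_union, mem_spt, not_or, not_not] at hi
    simp [Pi.sub_apply, hi.1, hi.2]
  have hp := hrip (z + z') hcp
  have hm := hrip (z - z') hcm
  have hnp : ∑ i, (z + z') i ^ 2 = (∑ i, z i ^ 2) + ∑ i, z' i ^ 2 := by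
    simp only [Pi.add_apply]
    rw [norm2_expand_add z z', hsum0]; ring
  have hnm : ∑ i, (z - z') i ^ 2 = (∑ i, z i ^ 2) + ∑ i, z' i ^ 2 := by
    have : ∑ i, (z i - z' i) ^ 2 = (∑ i, z i ^2) + (∑ i, z' i ^2) - 2 * ∑ i, z i * z' i := by
      rw [Finset.mul_sum, ← Finset.sum_add_distrib, ← Finset.sum_sub_distrib]
      exact Finset.sum_congr rfl fun i _ => by ring
    simp only [Pi.sub_apply]
    rw [this, hsum0]; ring
  have hmvp : ∀ j, (A.mulVec (z + z')) j = (A.mulVec z) j + (A.mulVec z') j := by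
    intro j; rw [Matrix.mulVec_add]; simp
  have hmvm : ∀ j, (A.mulVec (z - z')) j = (A.mulVec z) j - (A.mulVec z') j := by
    intro j; rw [Matrix.mulVec_sub]; simp
  have hep : ∑ j, (A.mulVec (z + z')) j ^ 2
      = (∑ j, (A.mulVec z) j ^ 2) + (∑ j, (A.mulVec z') j ^ 2)
        + 2 * ∑ j, (A.mulVec z) j * (A.mulVec z') j := by
    calc ∑ j, (A.mulVec (z + z')) j ^ 2
        = ∑ j, ((A.mulVec z) j + (A.mulVec z') j) ^ 2 :=
          Finset.sum_congr rfl fun j _ => by rw [hmvp j]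
      _ = _ := norm2_expand_add _ _
  have hem : ∑ j, (A.mulVec (z - z')) j ^ 2
      = (∑ j, (A.mulVec z) j ^ 2) + (∑ j, (A.mulVec z') j ^ 2)
        - 2 * ∑ j, (A.mulVec z) j * (A.mulVec z') j := by
    calc ∑ j, (A.mulVec (z - z')) j ^ 2
        = ∑ j, ((A.mulVec z) j - (A.mulVec z') j) ^ 2 :=
          Finset.sum_congr rfl fun j _ => by rw [hmvm j]
      _ = _ := by
          rw [Finset.mul_sum, ← Finset.sum_add_distrib, ← Finset.sum_sub_distrib]
          exact Finset.sum_congr rfl fun i _ => by ring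
  rw [abs_le]
  constructor
  · have h1 := hp.1
    have h2 := hm.2
    rw [hnp] at h1; rw [hnm] at h2; rw [hep] at h1; rw [hem] at h2
    linarith
  · have h1 := hp.2
    have h2 := hm.1
    rw [hnp] at h1; rw [hnm] at h2; rw [hep] at h1; rw [hem] at h2
    linarith


/-- restricted orthogonality, product form -/
lemma ro_of_rip {n m S : ℕ} {A : Matrix (Fin n) (Fin m) ℝ} {δ : ℝ}
    (h : RIPBound A S δ) {z z' : Fin m → ℝ}
    (hd : Disjoint (spt z) (spt z')) (hc : (spt z).card + (spt z').card ≤ S) :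
    |∑ j, (A.mulVec z) j * (A.mulVec z') j| ≤ δ * norm2 z * norm2 z' := by
  have hδ0 : 0 ≤ δ := h.1
  set a := norm2 z with ha
  set b := norm2 z' with hb
  have ha0 : 0 ≤ a := norm2_nonneg z
  have hb0 : 0 ≤ b := norm2_nonneg z'
  have ha2 : a ^ 2 = ∑ i, z i ^ 2 := sq_norm2 z
  have hb2 : b ^ 2 = ∑ i, z' i ^ 2 := sq_norm2 z'
  by_cases hza : a = 0
  · have hz0 : ∀ i, z i = 0 := by
      intro i
      have hs : ∑ i, z i ^ 2 = 0 := by rw [← ha2, hza]; ring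
      have := (Finset.sum_eq_zero_iff_of_nonneg (fun i _ => sq_nonneg (z i))).mp hs i
        (Finset.mem_univ i)
      exact pow_eq_zero_iff (by norm_num) |>.mp this
    have : ∀ j, A.mulVec z j = 0 := by
      intro j
      simp only [Matrix.mulVec, dotProduct]
      exact Finset.sum_eq_zero fun i _ => by rw [hz0 i, mul_zero]
    have : ∑ j, (A.mulVec z) j * (A.mulVec z') j = 0 :=
      Finset.sum_eq_zero fun j _ => by rw [this j, zero_mul]
    rw [this, hza]
    simp
  by_cases hzb : b = 0
  · have hz0 : ∀ i, z' i = 0 := by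
      intro i
      have hs : ∑ i, z' i ^ 2 = 0 := by rw [← hb2, hzb]; ring
      have := (Finset.sum_eq_zero_iff_of_nonneg (fun i _ => sq_nonneg (z' i))).mp hs i
        (Finset.mem_univ i)
      exact pow_eq_zero_iff (by norm_num) |>.mp this
    have : ∀ j, A.mulVec z' j = 0 := by
      intro j
      simp only [Matrix.mulVec, dotProduct]
      exact Finset.sum_eq_zero fun i _ => by rw [hz0 i, mul_zero]
    have : ∑ j, (A.mulVec z) j * (A.mulVec z') j = 0 :=
      Finset.sum_eq_zero fun j _ => by rw [this j, mul_zero]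
    rw [this, hzb]
    simp
  have hap : 0 < a := lt_of_le_of_ne ha0 (Ne.symm hza)
  have hbp : 0 < b := lt_of_le_of_ne hb0 (Ne.symm hzb)
  -- apply ro_aux to scaled vectors
  have hsub1 : spt (b • z) ⊆ spt z := spt_subset fun i hi => by
    have : z i = 0 := by by_contra hcon; exact hi (mem_spt.mpr hcon)
    simp [this]
  have hsub2 : spt (a • z') ⊆ spt z' := spt_subset fun i hi => by
    have : z' i = 0 := by by_contra hcon; exact hi (mem_spt.mpr hcon)
    simp [this]
  have hd' : Disjoint (spt (b • z)) (spt (a • z')) :=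
    Finset.disjoint_of_subset_left hsub1 (Finset.disjoint_of_subset_right hsub2 hd)
  have hc' : (spt (b • z)).card + (spt (a • z')).card ≤ S :=
    le_trans (add_le_add (Finset.card_le_card hsub1) (Finset.card_le_card hsub2)) hc
  have haux := ro_aux h hd' hc'
  have hs1 : ∑ i, (b • z) i ^ 2 = b ^ 2 * ∑ i, z i ^ 2 := by
    rw [Finset.mul_sum]; exact Finset.sum_congr rfl fun i _ => by
      simp [Pi.smul_apply, smul_eq_mul]; ring
  have hs2 : ∑ i, (a • z') i ^ 2 = a ^ 2 * ∑ i, z' i ^ 2 := by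
    rw [Finset.mul_sum]; exact Finset.sum_congr rfl fun i _ => by
      simp [Pi.smul_apply, smul_eq_mul]; ring
  have hmv1 : ∀ j, (A.mulVec (b • z)) j = b * (A.mulVec z) j := by
    intro j; rw [Matrix.mulVec_smul]; simp
  have hmv2 : ∀ j, (A.mulVec (a • z')) j = a * (A.mulVec z') j := by
    intro j; rw [Matrix.mulVec_smul]; simp
  have hlhs : ∑ j, (A.mulVec (b • z)) j * (A.mulVec (a • z')) j
      = (b * a) * ∑ j, (A.mulVec z) j * (A.mulVec z') j := by
    rw [Finset.mul_sum]
    exact Finset.sum_congr rfl fun j _ => by rw [hmv1 j, hmv2 j]; ring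
  rw [hlhs, hs1, hs2, ← ha2, ← hb2, abs_mul, abs_of_pos (mul_pos hbp hap)] at haux
  have hfin : b * a * |∑ j, (A.mulVec z) j * (A.mulVec z') j| ≤ b * a * (δ * a * b) := by
    calc b * a * |∑ j, (A.mulVec z) j * (A.mulVec z') j|
        ≤ δ * (b ^ 2 * a ^ 2 + a ^ 2 * b ^ 2) / 2 := haux
      _ = b * a * (δ * a * b) := by ring
  exact le_of_mul_le_mul_left hfin (mul_pos hbp hap)

/-- Partition a list into consecutive chunks of size `k`. -/
def chunks {α : Type*} (k : ℕ) : List α → List (List α)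
  | [] => []
  | a :: t =>
    if k = 0 then [] else (a :: t).take k :: chunks k ((a :: t).drop k)
termination_by l => l.length
decreasing_by
  rename_i hyp
  simp only [List.length_drop, List.length_cons]
  omega

lemma chunks_nil {α : Type*} (k : ℕ) : chunks k ([] : List α) = [] := by
  rw [chunks]

lemma chunks_zero {α : Type*} (l : List α) : chunks 0 l = [] := by
  cases l with
  | nil => rw [chunks]
  | cons a t => rw [chunks]; simp

lemma chunks_cons {α : Type*} {k : ℕ} {l : List α} (hk : k ≠ 0) (hl : l ≠ []) :
    chunks k l = l.take k :: chunks k (l.drop k) := by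
  cases l with
  | nil => exact absurd rfl hl
  | cons a t => rw [chunks]; simp [hk]

lemma chunks_flatten {α : Type*} {k : ℕ} (hk : k ≠ 0) :
    ∀ (N : ℕ) (l : List α), l.length ≤ N → (chunks k l).flatten = l := by
  intro N
  induction N with
  | zero =>
      intro l hl
      have : l = [] := List.eq_nil_of_length_eq_zero (Nat.le_zero.mp hl)
      simp [this, chunks_nil]
  | succ N ih =>
      intro l hl
      by_cases h0 : l = []
      · simp [h0, chunks_nil]
      · rw [chunks_cons hk h0, List.flatten_cons]
        have hlen : (l.drop k).length ≤ N := by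
          simp only [List.length_drop]
          have : 0 < l.length := List.length_pos_iff.mpr h0
          have : 0 < k := Nat.pos_of_ne_zero hk
          omega
        rw [ih (l.drop k) hlen, List.take_append_drop]

lemma chunks_sublist {α : Type*} {k : ℕ} :
    ∀ (N : ℕ) (l : List α), l.length ≤ N → ∀ c ∈ chunks k l, List.Sublist c l := by
  intro N
  induction N with
  | zero =>
      intro l hl c hc
      have : l = [] := List.eq_nil_of_length_eq_zero (Nat.le_zero.mp hl)
      rw [this, chunks_nil] at hc
      simp at hc
  | succ N ih =>
      intro l hl c hc
      by_cases hk : k = 0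
      · rw [hk, chunks_zero] at hc; simp at hc
      by_cases h0 : l = []
      · rw [h0, chunks_nil] at hc; simp at hc
      rw [chunks_cons hk h0] at hc
      rcases List.mem_cons.mp hc with h | h
      · rw [h]; exact List.take_sublist k l
      · have hlen : (l.drop k).length ≤ N := by
          simp only [List.length_drop]
          have : 0 < l.length := List.length_pos_iff.mpr h0
          have : 0 < k := Nat.pos_of_ne_zero hk
          omega
        exact (ih (l.drop k) hlen c h).trans (List.drop_sublist k l)

lemma chunks_length_le {α : Type*} {k : ℕ} :
    ∀ (N : ℕ) (l : List α), l.length ≤ N → ∀ c ∈ chunks k l, c.length ≤ k := by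
  intro N
  induction N with
  | zero =>
      intro l hl c hc
      have : l = [] := List.eq_nil_of_length_eq_zero (Nat.le_zero.mp hl)
      rw [this, chunks_nil] at hc; simp at hc
  | succ N ih =>
      intro l hl c hc
      by_cases hk : k = 0
      · rw [hk, chunks_zero] at hc; simp at hc
      by_cases h0 : l = []
      · rw [h0, chunks_nil] at hc; simp at hc
      rw [chunks_cons hk h0] at hc
      rcases List.mem_cons.mp hc with h | h
      · rw [h, List.length_take]; exact min_le_left _ _
      · have hlen : (l.drop k).length ≤ N := by
          simp only [List.length_drop]
          have : 0 < l.length := List.length_pos_iff.mpr h0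
          have : 0 < k := Nat.pos_of_ne_zero hk
          omega
        exact ih (l.drop k) hlen c h

lemma list_sum_sq_le (L : List ℝ) (h : ∀ a ∈ L, 0 ≤ a) :
    (L.map (fun a => a ^ 2)).sum ≤ L.sum ^ 2 := by
  induction L with
  | nil => simp
  | cons a L ih =>
      simp only [List.map_cons, List.sum_cons]
      have h0 : 0 ≤ a := h a List.mem_cons_self
      have hS : 0 ≤ L.sum := List.sum_nonneg fun x hx => h x (List.mem_cons_of_mem a hx)
      have := ih fun x hx => h x (List.mem_cons_of_mem a hx)
      nlinarith

lemma list_abs_sum_le (L : List ℝ) : |L.sum| ≤ (L.map (fun a => |a|)).sum := by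
  induction L with
  | nil => simp
  | cons a L ih =>
      simp only [List.map_cons, List.sum_cons]
      exact le_trans (abs_add_le a L.sum) (by linarith)

lemma finset_sum_list_sum {ι γ : Type*} (s : Finset ι) (W : List γ) (g : γ → ι → ℝ) :
    ∑ i ∈ s, (W.map (fun c => g c i)).sum = (W.map (fun c => ∑ i ∈ s, g c i)).sum := by
  induction W with
  | nil => simp
  | cons c W ih => simp only [List.map_cons, List.sum_cons, Finset.sum_add_distrib, ih]

lemma sum_indicator_flatten {α : Type*} [DecidableEq α] (i : α) (x : ℝ) :
    ∀ (L : List (List α)), L.Pairwise List.Disjoint →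
      (L.map (fun c => if i ∈ c then x else 0)).sum = if i ∈ L.flatten then x else 0 := by
  intro L
  induction L with
  | nil => simp
  | cons c L ih =>
      intro hp
      rw [List.pairwise_cons] at hp
      simp only [List.map_cons, List.sum_cons, List.flatten_cons]
      by_cases hic : i ∈ c
      · have hnot : i ∉ L.flatten := by
          intro hmem
          obtain ⟨l', hl', hil'⟩ := List.mem_flatten.mp hmem
          exact hp.1 l' hl' hic hil'
        rw [ih hp.2, if_pos hic, if_neg hnot, if_pos (List.mem_append.mpr (Or.inl hic))]
        ring
      · rw [ih hp.2, if_neg hic, zero_add]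
        by_cases hif : i ∈ L.flatten
        · rw [if_pos hif, if_pos (List.mem_append.mpr (Or.inr hif))]
        · rw [if_neg hif, if_neg (by simp [hic, hif])]

lemma chunk_aux {α : Type*} (k : ℕ) (hk : k ≠ 0) (f : α → ℝ) (hf0 : ∀ a, 0 ≤ f a) :
    ∀ (N : ℕ) (l : List α), l.length ≤ N → l.Pairwise (fun i j => f j ≤ f i) →
    ∀ M : ℝ, 0 ≤ M → (∀ a ∈ l, f a ≤ M) →
    ((chunks k l).map (fun c => Real.sqrt ((c.map (fun i => f i ^ 2)).sum))).sum
      ≤ Real.sqrt k * M + (l.map f).sum / Real.sqrt k := by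
  have hkR : (0:ℝ) < (k:ℝ) := by exact_mod_cast Nat.pos_of_ne_zero hk
  have hksqrt : (0:ℝ) < Real.sqrt k := Real.sqrt_pos.mpr hkR
  have hkk : Real.sqrt k * Real.sqrt k = (k:ℝ) := Real.mul_self_sqrt (le_of_lt hkR)
  intro N
  induction N with
  | zero =>
      intro l hl _ M hM0 _
      have h0 : l = [] := List.eq_nil_of_length_eq_zero (Nat.le_zero.mp hl)
      rw [h0, chunks_nil]
      simp only [List.map_nil, List.sum_nil]
      positivity
  | succ N ih =>
      intro l hl hpair M hM0 hMb
      by_cases h0 : l = []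
      · rw [h0, chunks_nil]
        simp only [List.map_nil, List.sum_nil]
        positivity
      rw [chunks_cons hk h0, List.map_cons, List.sum_cons]
      have hlsum0 : 0 ≤ (l.map f).sum :=
        List.sum_nonneg fun x hx => by
          obtain ⟨a, _, rfl⟩ := List.mem_map.mp hx; exact hf0 a
      -- bound on the first chunk
      have hts : ((l.take k).map (fun i => f i ^ 2)).sum ≤ (k:ℝ) * M ^ 2 := by
        have hb : ∀ x ∈ (l.take k).map (fun i => f i ^ 2), x ≤ M ^ 2 := by
          intro x hx
          obtain ⟨a, ha, rfl⟩ := List.mem_map.mp hx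
          have haM : f a ≤ M := hMb a ((List.take_sublist k l).subset ha)
          nlinarith [hf0 a]
        have h2 := List.sum_le_card_nsmul _ (M ^ 2) hb
        rw [List.length_map, nsmul_eq_mul] at h2
        have hlen : ((l.take k).length : ℝ) ≤ (k:ℝ) := by
          exact_mod_cast (by rw [List.length_take]; exact min_le_left _ _ :
            (l.take k).length ≤ k)
        nlinarith [sq_nonneg M]
      have h1 : Real.sqrt (((l.take k).map (fun i => f i ^ 2)).sum) ≤ Real.sqrt k * M := by
        have h2 := Real.sqrt_le_sqrt hts
        rwa [Real.sqrt_mul (le_of_lt hkR), Real.sqrt_sq hM0] at h2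
      by_cases hd0 : l.drop k = []
      · rw [hd0, chunks_nil]
        simp only [List.map_nil, List.sum_nil, add_zero]
        have : 0 ≤ (l.map f).sum / Real.sqrt k := div_nonneg hlsum0 (le_of_lt hksqrt)
        linarith
      -- the first chunk is full
      have htfull : (l.take k).length = k := by
        have hdl : 0 < (l.drop k).length := List.length_pos_iff.mpr hd0
        rw [List.length_drop] at hdl
        rw [List.length_take]
        omega
      have hdl : (l.drop k).length ≤ N := by
        have hlp : 0 < l.length := List.length_pos_iff.mpr h0
        have hkp : 0 < k := Nat.pos_of_ne_zero hk
        rw [List.length_drop]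
        omega
      have hdp : (l.drop k).Pairwise (fun i j => f j ≤ f i) :=
        List.Pairwise.sublist (List.drop_sublist k l) hpair
      have hrel : ∀ a ∈ l.take k, ∀ b ∈ l.drop k, f b ≤ f a := by
        have hp2 : (l.take k ++ l.drop k).Pairwise (fun i j => f j ≤ f i) := by
          rw [List.take_append_drop]; exact hpair
        exact (List.pairwise_append.mp hp2).2.2
      have htsum0 : 0 ≤ ((l.take k).map f).sum :=
        List.sum_nonneg fun x hx => by
          obtain ⟨a, _, rfl⟩ := List.mem_map.mp hx; exact hf0 a
      set M' : ℝ := ((l.take k).map f).sum / (k:ℝ) with hM'def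
      have hM'0 : 0 ≤ M' := div_nonneg htsum0 (le_of_lt hkR)
      have hM'b : ∀ b ∈ l.drop k, f b ≤ M' := by
        intro b hb
        have h3 : ((l.take k).map f).length • f b ≤ ((l.take k).map f).sum := by
          apply List.card_nsmul_le_sum
          intro x hx
          obtain ⟨a, ha, rfl⟩ := List.mem_map.mp hx
          exact hrel a ha b hb
        rw [List.length_map, htfull, nsmul_eq_mul] at h3
        rw [hM'def, le_div_iff₀ hkR]
        linarith
      have ihd := ih (l.drop k) hdl hdp M' hM'0 hM'b
      have heq : Real.sqrt k * M' = ((l.take k).map f).sum / Real.sqrt k := by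
        rw [eq_div_iff (ne_of_gt hksqrt)]
        calc Real.sqrt k * M' * Real.sqrt k = (Real.sqrt k * Real.sqrt k) * M' := by ring
          _ = (k:ℝ) * M' := by rw [hkk]
          _ = ((l.take k).map f).sum := by rw [hM'def]; field_simp
      have hsum_split : (l.map f).sum = ((l.take k).map f).sum + ((l.drop k).map f).sum := by
        conv_lhs => rw [← List.take_append_drop k l]
        rw [List.map_append, List.sum_append]
      have hgoal := add_le_add h1 ihd
      rw [heq] at hgoal
      rw [hsum_split, add_div]
      linarith

lemma chunk_tail {α : Type*} (k : ℕ) (hk : k ≠ 0) (f : α → ℝ) (hf0 : ∀ a, 0 ≤ f a)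
    (l : List α) (hpair : l.Pairwise (fun i j => f j ≤ f i)) :
    (((chunks k l).tail).map (fun c => Real.sqrt ((c.map (fun i => f i ^ 2)).sum))).sum
      ≤ (l.map f).sum / Real.sqrt k := by
  have hkR : (0:ℝ) < (k:ℝ) := by exact_mod_cast Nat.pos_of_ne_zero hk
  have hksqrt : (0:ℝ) < Real.sqrt k := Real.sqrt_pos.mpr hkR
  have hkk : Real.sqrt k * Real.sqrt k = (k:ℝ) := Real.mul_self_sqrt (le_of_lt hkR)
  have hlsum0 : 0 ≤ (l.map f).sum :=
    List.sum_nonneg fun x hx => by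
      obtain ⟨a, _, rfl⟩ := List.mem_map.mp hx; exact hf0 a
  by_cases h0 : l = []
  · rw [h0, chunks_nil]
    simp
  rw [chunks_cons hk h0, List.tail_cons]
  by_cases hd0 : l.drop k = []
  · rw [hd0, chunks_nil]
    simp only [List.map_nil, List.sum_nil]
    exact div_nonneg hlsum0 (le_of_lt hksqrt)
  have htfull : (l.take k).length = k := by
    have hdl : 0 < (l.drop k).length := List.length_pos_iff.mpr hd0
    rw [List.length_drop] at hdl
    rw [List.length_take]
    omega
  have hdp : (l.drop k).Pairwise (fun i j => f j ≤ f i) :=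
    List.Pairwise.sublist (List.drop_sublist k l) hpair
  have hrel : ∀ a ∈ l.take k, ∀ b ∈ l.drop k, f b ≤ f a := by
    have hp2 : (l.take k ++ l.drop k).Pairwise (fun i j => f j ≤ f i) := by
      rw [List.take_append_drop]; exact hpair
    exact (List.pairwise_append.mp hp2).2.2
  have htsum0 : 0 ≤ ((l.take k).map f).sum :=
    List.sum_nonneg fun x hx => by
      obtain ⟨a, _, rfl⟩ := List.mem_map.mp hx; exact hf0 a
  set M' : ℝ := ((l.take k).map f).sum / (k:ℝ) with hM'def
  have hM'0 : 0 ≤ M' := div_nonneg htsum0 (le_of_lt hkR)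
  have hM'b : ∀ b ∈ l.drop k, f b ≤ M' := by
    intro b hb
    have h3 : ((l.take k).map f).length • f b ≤ ((l.take k).map f).sum := by
      apply List.card_nsmul_le_sum
      intro x hx
      obtain ⟨a, ha, rfl⟩ := List.mem_map.mp hx
      exact hrel a ha b hb
    rw [List.length_map, htfull, nsmul_eq_mul] at h3
    rw [hM'def, le_div_iff₀ hkR]
    linarith
  have haux := chunk_aux k hk f hf0 (l.drop k).length (l.drop k) le_rfl hdp M' hM'0 hM'b
  have heq : Real.sqrt k * M' = ((l.take k).map f).sum / Real.sqrt k := by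
    rw [eq_div_iff (ne_of_gt hksqrt)]
    calc Real.sqrt k * M' * Real.sqrt k = (Real.sqrt k * Real.sqrt k) * M' := by ring
      _ = (k:ℝ) * M' := by rw [hkk]
      _ = ((l.take k).map f).sum := by rw [hM'def]; field_simp
  have hsum_split : (l.map f).sum = ((l.take k).map f).sum + ((l.drop k).map f).sum := by
    conv_lhs => rw [← List.take_append_drop k l]
    rw [List.map_append, List.sum_append]
  rw [heq] at haux
  rw [hsum_split, add_div]
  linarith

lemma dot_list {n m : ℕ} (A : Matrix (Fin n) (Fin m) ℝ) (u : Fin m → ℝ) :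
    ∀ (W : List (Fin m → ℝ)),
      ∑ j, (A.mulVec u) j * (A.mulVec (fun i => (W.map (fun g => g i)).sum)) j
        = (W.map (fun g => ∑ j, (A.mulVec u) j * (A.mulVec g) j)).sum := by
  intro W
  induction W with
  | nil =>
      simp only [List.map_nil, List.sum_nil]
      have : (fun _ : Fin m => (0:ℝ)) = (0 : Fin m → ℝ) := rfl
      rw [this, Matrix.mulVec_zero]
      simp
  | cons g W ih =>
      simp only [List.map_cons, List.sum_cons]
      have hfun : (fun i => g i + (W.map (fun g' => g' i)).sum)
          = g + (fun i => (W.map (fun g' => g' i)).sum) := rfl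
      rw [hfun, Matrix.mulVec_add]
      simp only [Pi.add_apply]
      rw [← ih]
      rw [← Finset.sum_add_distrib]
      exact Finset.sum_congr rfl fun j _ => by ring

lemma exists_blocks {α : Type*} [DecidableEq α] (f : α → ℝ) (hf0 : ∀ a, 0 ≤ f a)
    (R : Finset α) (k : ℕ) (hk0R : k = 0 → R = ∅) :
    ∃ (D1 : Finset α) (Ds : List (Finset α)),
      D1 ⊆ R ∧ D1.card ≤ k ∧
      (∀ d ∈ Ds, d ⊆ R ∧ d.card ≤ k ∧ Disjoint D1 d) ∧
      (∀ (x : ℝ) (i : α),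
        (Ds.map (fun d => if i ∈ d then x else 0)).sum
          = if i ∈ R \ D1 then x else 0) ∧
      ((Ds.map (fun d => Real.sqrt (∑ i ∈ d, f i ^ 2))).sum
          ≤ (∑ i ∈ R, f i) / Real.sqrt k ∨ Ds = []) := by
  by_cases hk : k = 0
  · refine ⟨∅, [], by simp, by simp, by simp, ?_, Or.inr rfl⟩
    intro x i
    rw [hk0R hk]
    simp
  -- sort the elements of R by decreasing f
  have hex : ∃ li : List α, li.Nodup ∧ (∀ i, i ∈ li ↔ i ∈ R) ∧
      li.Pairwise (fun i j => f j ≤ f i) := by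
    refine ⟨R.toList.mergeSort (fun i j => decide (f j ≤ f i)), ?_, ?_, ?_⟩
    · exact (List.mergeSort_perm R.toList _).nodup_iff.mpr R.nodup_toList
    · intro i
      rw [(List.mergeSort_perm R.toList _).mem_iff, Finset.mem_toList]
    · have hs := List.pairwise_mergeSort (le := fun i j => decide (f j ≤ f i))
        (fun a b c hab hbc => by
          simp only [decide_eq_true_eq] at *
          exact le_trans hbc hab)
        (fun a b => by
          simp only [Bool.or_eq_true, decide_eq_true_eq]
          exact le_total (f b) (f a))
        R.toList
      exact hs.imp (fun {a b} hab => by simpa [decide_eq_true_eq] using hab)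
  obtain ⟨li, hnd, hmem, hpair⟩ := hex
  have hjoin : (chunks k li).flatten = li := chunks_flatten hk li.length li le_rfl
  have hcssub : ∀ c ∈ chunks k li, c.Sublist li := chunks_sublist li.length li le_rfl
  have hcsle : ∀ c ∈ chunks k li, c.length ≤ k := chunks_length_le li.length li le_rfl
  have hpairdis : (chunks k li).Pairwise List.Disjoint := by
    have hfn : (chunks k li).flatten.Nodup := by rw [hjoin]; exact hnd
    exact ((List.nodup_flatten).mp hfn).2
  have htdnodup : li.take k ++ li.drop k = li := List.take_append_drop k li
  have htddisj : (li.take k).Disjoint (li.drop k) := by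
    have : (li.take k ++ li.drop k).Nodup := by rw [htdnodup]; exact hnd
    exact (List.nodup_append'.mp this).2.2
  have hWflat : ((chunks k li).tail).flatten = li.drop k := by
    rcases hcs0 : chunks k li with _ | ⟨c, cs'⟩
    · simp only [List.tail_nil, List.flatten_nil]
      by_cases hl0 : li = []
      · rw [hl0]; simp
      · exfalso
        rw [chunks_cons hk hl0] at hcs0
        exact nomatch hcs0
    · have hl0 : li ≠ [] := by
        intro hl0
        rw [hl0, chunks_nil] at hcs0
        exact nomatch hcs0
      have hcseq : chunks k li = li.take k :: chunks k (li.drop k) := chunks_cons hk hl0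
      rw [hcs0] at hcseq
      obtain ⟨hc1, hc2⟩ := List.cons.inj hcseq
      simp only [List.tail_cons, hc2]
      exact chunks_flatten hk (li.drop k).length (li.drop k) le_rfl
  have hWdis : ((chunks k li).tail).Pairwise List.Disjoint :=
    List.Pairwise.sublist (List.tail_sublist _) hpairdis
  refine ⟨(li.take k).toFinset, ((chunks k li).tail).map List.toFinset, ?_, ?_, ?_, ?_, ?_⟩
  · intro i hi
    rw [List.mem_toFinset] at hi
    exact (hmem i).mp ((List.take_sublist k li).subset hi)
  · refine le_trans (List.toFinset_card_le _) ?_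
    rw [List.length_take]
    exact min_le_left _ _
  · intro d hd
    obtain ⟨c, hc, rfl⟩ := List.mem_map.mp hd
    have hcmem : c ∈ chunks k li := List.mem_of_mem_tail hc
    refine ⟨?_, ?_, ?_⟩
    · intro i hi
      rw [List.mem_toFinset] at hi
      exact (hmem i).mp ((hcssub c hcmem).subset hi)
    · exact le_trans (List.toFinset_card_le _) (hcsle c hcmem)
    · have hl0 : li ≠ [] := by
        intro hl0
        rw [hl0, chunks_nil] at hcmem
        simp at hcmem
      have hcseq : chunks k li = li.take k :: chunks k (li.drop k) := chunks_cons hk hl0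
      have hdlist : (li.take k).Disjoint c := by
        have hpc := hcseq ▸ hpairdis
        refine (List.pairwise_cons.mp hpc).1 c ?_
        have : (chunks k li).tail = chunks k (li.drop k) := by rw [hcseq]; rfl
        rw [← this]
        exact hc
      rw [Finset.disjoint_left]
      intro i hi1 hi2
      rw [List.mem_toFinset] at hi1 hi2
      exact hdlist hi1 hi2
  · intro x i
    have h1 : (((chunks k li).tail).map List.toFinset).map (fun d => if i ∈ d then x else 0)
        = ((chunks k li).tail).map (fun c => if i ∈ c then x else 0) := by
      rw [List.map_map]
      apply List.map_congr_left
      intro c _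
      by_cases hic : i ∈ c
      · simp only [Function.comp_apply]
        rw [if_pos (List.mem_toFinset.mpr hic), if_pos hic]
      · simp only [Function.comp_apply]
        rw [if_neg (fun hc => hic (List.mem_toFinset.mp hc)), if_neg hic]
    rw [h1, sum_indicator_flatten i x _ hWdis, hWflat]
    by_cases hid : i ∈ li.drop k
    · rw [if_pos hid, if_pos ?_]
      rw [Finset.mem_sdiff]
      constructor
      · exact (hmem i).mp ((List.drop_sublist k li).subset hid)
      · rw [List.mem_toFinset]
        intro hc
        exact htddisj hc hid
    · rw [if_neg hid, if_neg ?_]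
      rw [Finset.mem_sdiff, List.mem_toFinset]
      rintro ⟨hiR, hitake⟩
      have : i ∈ li.take k ++ li.drop k := by rw [htdnodup]; exact (hmem i).mpr hiR
      rcases List.mem_append.mp this with hc | hc
      · exact hitake hc
      · exact hid hc
  · left
    have hct := chunk_tail k hk f hf0 li hpair
    have h1 : (((chunks k li).tail).map List.toFinset).map
          (fun d => Real.sqrt (∑ i ∈ d, f i ^ 2))
        = ((chunks k li).tail).map (fun c => Real.sqrt ((c.map (fun i => f i ^ 2)).sum)) := by
      rw [List.map_map]
      apply List.map_congr_left
      intro c hc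
      simp only [Function.comp_apply]
      congr 1
      exact List.sum_toFinset _ ((List.mem_of_mem_tail hc |> hcssub c).nodup hnd)
    have h2 : (li.map f).sum = ∑ i ∈ R, f i := by
      have hRfin : li.toFinset = R := by
        ext i
        rw [List.mem_toFinset]
        exact hmem i
      rw [← hRfin, List.sum_toFinset _ hnd]
    rw [h1, ← h2]
    exact hct

lemma qbound_helper {δ q ε s2 : ℝ} (h2u : s2 ≤ 1.415) (h2nn : 0 ≤ s2)
    (hδ0 : 0 ≤ δ) (hδu : δ < 0.2075) (hqnn : 0 ≤ q) (hε0 : 0 ≤ ε)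
    (hm : (1 - δ) * q ^ 2 ≤ (1.1 * q) * (2 * ε) + δ * (s2 * q) * q) : q ≤ 4.5 * ε := by
  have hco : 0.498 ≤ 1 - δ - s2 * δ := by nlinarith
  have hineq : 0.498 * q ^ 2 ≤ 2.2 * ε * q := by nlinarith
  rcases eq_or_lt_of_le hqnn with hq0 | hqpos
  · rw [← hq0]; positivity
  · nlinarith

lemma final_helper {a q Sg ε : ℝ} (ha : a ^ 2 ≤ q ^ 2 + Sg ^ 2) (hSg : Sg ≤ q)
    (hSg0 : 0 ≤ Sg) (hq : q ≤ 4.5 * ε) (hq0 : 0 ≤ q) (hε : 0 ≤ ε) :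
    |a| ≤ 8.79 * ε := by
  have h2 : a ^ 2 ≤ (8.79 * ε) ^ 2 := by nlinarith
  have h1 : Real.sqrt (a ^ 2) ≤ Real.sqrt ((8.79 * ε) ^ 2) := Real.sqrt_le_sqrt h2
  rwa [Real.sqrt_sq_eq_abs, Real.sqrt_sq (by positivity)] at h1

set_option maxHeartbeats 1000000 in
lemma modcs_linf {n m : ℕ} (A : Matrix (Fin n) (Fin m) ℝ)
    (x : Fin m → ℝ) (w : Fin n → ℝ) (ε δ : ℝ) (T : Finset (Fin m))
    (SN SΔe SΔ : ℕ)
    (hw : norm2 w ≤ ε)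
    (hN : (spt x).card ≤ SN)
    (hΔe : (T \ spt x).card ≤ SΔe)
    (hΔ : (spt x \ T).card ≤ SΔ)
    (hδ : δ < (Real.sqrt 2 - 1) / 2)
    (hRIP : RIPBound A (SN + SΔe + SΔ) δ)
    (xhat : Fin m → ℝ)
    (hfeas : norm2 (fun j => ((A.mulVec x) j + w j) - (A.mulVec xhat) j) ≤ ε)
    (hmin : ∀ β : Fin m → ℝ,
      norm2 (fun j => ((A.mulVec x) j + w j) - (A.mulVec β) j) ≤ ε →
      ∑ i ∈ Tᶜ, |xhat i| ≤ ∑ i ∈ Tᶜ, |β i|) :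
    ∀ i0, |xhat i0 - x i0| ≤ 8.79 * ε := by
  intro i0
  obtain ⟨hδ0, hδ1, hrip⟩ := hRIP
  have hε0 : 0 ≤ ε := le_trans (norm2_nonneg w) hw
  have h2sq : Real.sqrt 2 ^ 2 = 2 := Real.sq_sqrt (by norm_num)
  have h2nn : (0:ℝ) ≤ Real.sqrt 2 := Real.sqrt_nonneg 2
  have h2l : (1.414:ℝ) ≤ Real.sqrt 2 := by nlinarith
  have h2u : Real.sqrt 2 ≤ (1.415:ℝ) := by nlinarith
  have hδu : δ < 0.2075 := by
    have : (Real.sqrt 2 - 1) / 2 ≤ 0.2075 := by linarith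
    linarith
  set N : Finset (Fin m) := spt x with hNdef
  set h : Fin m → ℝ := fun i => xhat i - x i with hdef
  have hxzero : ∀ i, i ∉ N → x i = 0 := by
    intro i hi
    by_contra hc
    exact hi (mem_spt.mpr hc)
  -- feasibility of x
  have hfx : norm2 (fun j => ((A.mulVec x) j + w j) - (A.mulVec x) j) ≤ ε := by
    have heq : (fun j => ((A.mulVec x) j + w j) - (A.mulVec x) j) = w := by
      funext j; ring
    rw [heq]; exact hw
  have hl1 : ∑ i ∈ Tᶜ, |xhat i| ≤ ∑ i ∈ Tᶜ, |x i| := hmin x hfx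
  -- tube constraint
  have htube : norm2 (A.mulVec h) ≤ 2 * ε := by
    have heq : A.mulVec h = fun j =>
        w j + (-(((A.mulVec x) j + w j) - (A.mulVec xhat) j)) := by
      funext j
      have hmv : A.mulVec h j = A.mulVec xhat j - A.mulVec x j := by
        have hxx : h = xhat - x := rfl
        rw [hxx, Matrix.mulVec_sub]; simp
      rw [hmv]; ring
    rw [heq]
    refine le_trans (norm2_add_le w _) ?_
    have hneg : norm2 (fun j => -(((A.mulVec x) j + w j) - (A.mulVec xhat) j))
        = norm2 (fun j => ((A.mulVec x) j + w j) - (A.mulVec xhat) j) := by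
      unfold norm2; congr 1; exact Finset.sum_congr rfl fun j _ => by ring
    rw [hneg]; linarith
  -- cone constraint
  set Δ : Finset (Fin m) := N \ T with hΔdef
  set T0 : Finset (Fin m) := T ∪ N with hT0def
  have hTc : Tᶜ = Δ ∪ T0ᶜ := by
    ext i
    simp only [Finset.mem_compl, Finset.mem_union, Finset.mem_sdiff, hΔdef, hT0def]
    tauto
  have hdisjΔ : Disjoint Δ (T0ᶜ) := by
    rw [Finset.disjoint_left]
    intro a ha hb
    rw [Finset.mem_sdiff] at ha
    rw [Finset.mem_compl] at hb
    exact hb (Finset.mem_union_right T ha.1)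
  have hx_T0c : ∀ i ∈ T0ᶜ, x i = 0 := by
    intro i hi
    rw [Finset.mem_compl] at hi
    exact hxzero i (fun hc => hi (Finset.mem_union_right T hc))
  have hsum_hat : ∑ i ∈ Tᶜ, |xhat i| = ∑ i ∈ Δ, |xhat i| + ∑ i ∈ T0ᶜ, |h i| := by
    rw [hTc, Finset.sum_union hdisjΔ]
    congr 1
    exact Finset.sum_congr rfl fun i hi => by rw [hdef]; simp [hx_T0c i hi]
  have hsum_x : ∑ i ∈ Tᶜ, |x i| = ∑ i ∈ Δ, |x i| := by
    rw [hTc, Finset.sum_union hdisjΔ]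
    have : ∑ i ∈ T0ᶜ, |x i| = 0 :=
      Finset.sum_eq_zero fun i hi => by rw [hx_T0c i hi]; simp
    rw [this, add_zero]
  have htri : ∑ i ∈ Δ, |x i| ≤ ∑ i ∈ Δ, |xhat i| + ∑ i ∈ Δ, |h i| := by
    rw [← Finset.sum_add_distrib]
    apply Finset.sum_le_sum
    intro i _
    have : x i = xhat i - h i := by rw [hdef]; ring
    rw [this]
    exact abs_sub (xhat i) (h i)
  have hcone : ∑ i ∈ T0ᶜ, |h i| ≤ ∑ i ∈ Δ, |h i| := by
    rw [hsum_hat, hsum_x] at hl1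
    linarith
  -- tail index set
  set R : Finset (Fin m) := spt h \ T0 with hRdef
  have hRcone : ∑ i ∈ R, |h i| ≤ ∑ i ∈ Δ, |h i| := by
    refine le_trans ?_ hcone
    apply Finset.sum_le_sum_of_subset_of_nonneg
    · intro i hi
      rw [Finset.mem_compl]
      exact (Finset.mem_sdiff.mp hi).2
    · intro i _ _; exact abs_nonneg _
  set k : ℕ := Δ.card with hk
  set f : Fin m → ℝ := fun i => |h i| with hfdef
  -- when k = 0 the tail is empty
  have hk0R : k = 0 → R = ∅ := by
    intro hk0
    have hΔempty : Δ = ∅ := Finset.card_eq_zero.mp hk0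
    have hsum0 : ∑ i ∈ R, |h i| ≤ 0 := by
      rw [hΔempty] at hRcone; simpa using hRcone
    rw [Finset.eq_empty_iff_forall_notMem]
    intro i hi
    have h1 : |h i| = 0 := le_antisymm
      (le_trans (Finset.single_le_sum (f := fun i => |h i|)
        (fun j _ => abs_nonneg _) hi) hsum0) (abs_nonneg _)
    have h2 : h i ≠ 0 := mem_spt.mp (Finset.mem_sdiff.mp hi).1
    exact h2 (abs_eq_zero.mp h1)
  -- obtain the block structure
  obtain ⟨D1, Ds, hD1sub, hD1card, hDsmem, hcover, hbound⟩ :=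
    exists_blocks f (fun a => abs_nonneg _) R k hk0R
  set T01 : Finset (Fin m) := T0 ∪ D1 with hT01
  set u : Fin m → ℝ := restr T01 h with hu
  set q : ℝ := norm2 u with hq
  have hqnn : 0 ≤ q := norm2_nonneg u
  have hq2 : q ^ 2 = ∑ i, u i ^ 2 := sq_norm2 u
  have hRT0 : ∀ i ∈ R, i ∉ T0 := fun i hi => (Finset.mem_sdiff.mp hi).2
  have hD1T0 : ∀ i ∈ D1, i ∉ T0 := fun i hi => hRT0 i (hD1sub hi)
  -- cardinalities
  have hkSΔ : k ≤ SΔ := by rw [hk, hΔdef, hNdef]; exact hΔ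
  have hkSN : k ≤ SN := by
    rw [hk]
    exact le_trans (Finset.card_le_card (Finset.sdiff_subset)) hN
  have hT0card : T0.card ≤ SN + SΔe := by
    have hT0eq : T0 = N ∪ (T \ N) := by
      ext i
      simp only [hT0def, Finset.mem_union, Finset.mem_sdiff]
      tauto
    rw [hT0eq]
    refine le_trans (Finset.card_union_le _ _) ?_
    have : (T \ N).card ≤ SΔe := by rw [hNdef]; exact hΔe
    omega
  have hT01card : T01.card ≤ SN + SΔe + SΔ := by
    rw [hT01]
    refine le_trans (Finset.card_union_le _ _) ?_
    have : D1.card ≤ SΔ := le_trans hD1card hkSΔ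
    omega
  -- decomposition h = u + v
  set v : Fin m → ℝ := fun i => h i - u i with hv
  have hvdef : ∀ i, v i = if i ∈ R \ D1 then h i else 0 := by
    intro i
    by_cases hiT : i ∈ T01
    · have hui : u i = h i := by rw [hu, restr, if_pos hiT]
      have hnot : i ∉ R \ D1 := by
        rw [Finset.mem_sdiff]
        rintro ⟨hiR, hiD1⟩
        rcases Finset.mem_union.mp (hT01 ▸ hiT) with hc | hc
        · exact hRT0 i hiR hc
        · exact hiD1 hc
      rw [hv]; simp only [hui, if_neg hnot]; ring
    · have hui : u i = 0 := by rw [hu, restr, if_neg hiT]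
      by_cases hid : i ∈ R \ D1
      · rw [hv]; simp only [hui, if_pos hid]; ring
      · have hh0 : h i = 0 := by
          by_contra hc
          have hih : i ∈ spt h := mem_spt.mpr hc
          have hiT0 : i ∉ T0 := fun hc2 =>
            hiT (hT01 ▸ Finset.mem_union_left D1 hc2)
          have hiR : i ∈ R := by rw [hRdef]; exact Finset.mem_sdiff.mpr ⟨hih, hiT0⟩
          have hiD1 : i ∉ D1 := fun hc2 =>
            hiT (hT01 ▸ Finset.mem_union_right T0 hc2)
          exact hid (Finset.mem_sdiff.mpr ⟨hiR, hiD1⟩)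
        rw [hv]; simp only [hui, if_neg hid, hh0]; ring
  have hdecomp : ∀ i, h i = u i + v i := fun i => by rw [hv]; ring
  have hvW : ∀ i, v i = (Ds.map (fun d => restr d h i)).sum := by
    intro i
    have hmapeq : Ds.map (fun d => restr d h i)
        = Ds.map (fun d => if i ∈ d then h i else 0) := by
      apply List.map_congr_left
      intro d _
      simp [restr]
    rw [hmapeq, hcover (h i) i, hvdef i]
  -- split u into the T0 part and the D1 part
  have hu_split : ∀ i, u i = restr T0 h i + restr D1 h i := by
    intro i
    rw [hu, restr, restr, restr]
    by_cases h1 : i ∈ T0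
    · rw [if_pos (hT01 ▸ Finset.mem_union_left D1 h1), if_pos h1,
        if_neg (fun h2 => hD1T0 i h2 h1)]
      ring
    · by_cases h2 : i ∈ D1
      · rw [if_pos (hT01 ▸ Finset.mem_union_right T0 h2), if_neg h1, if_pos h2]
        ring
      · rw [if_neg (fun hc => by
          rcases Finset.mem_union.mp (hT01 ▸ hc) with hc' | hc'
          · exact h1 hc'
          · exact h2 hc'), if_neg h1, if_neg h2]
        ring
  have husq_split : ∀ i, u i ^ 2 = restr T0 h i ^ 2 + restr D1 h i ^ 2 := by
    intro i
    rw [hu_split i]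
    rw [restr, restr]
    by_cases h1 : i ∈ T0
    · rw [if_pos h1, if_neg (fun h2 => hD1T0 i h2 h1)]; ring
    · rw [if_neg h1]; ring
  have hsplitnorm : norm2 (restr T0 h) + norm2 (restr D1 h) ≤ Real.sqrt 2 * q := by
    set a := norm2 (restr T0 h) with hadef
    set b := norm2 (restr D1 h) with hbdef
    have ha0 : 0 ≤ a := norm2_nonneg _
    have hb0 : 0 ≤ b := norm2_nonneg _
    have hab : a ^ 2 + b ^ 2 = q ^ 2 := by
      rw [hq2, hadef, hbdef, sq_norm2, sq_norm2, ← Finset.sum_add_distrib]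
      exact (Finset.sum_congr rfl fun i _ => (husq_split i).symm)
    have hsq : (a + b) ^ 2 ≤ (Real.sqrt 2 * q) ^ 2 := by
      rw [mul_pow, h2sq]
      nlinarith [sq_nonneg (a - b)]
    nlinarith [mul_nonneg h2nn hqnn]
  -- per-block restricted orthogonality bound
  have hblock : ∀ d ∈ Ds, |∑ j, (A.mulVec u) j * (A.mulVec (restr d h)) j|
      ≤ δ * (Real.sqrt 2 * q) * norm2 (restr d h) := by
    intro d hd
    obtain ⟨hdsub, hdcard, hddis⟩ := hDsmem d hd
    set z' : Fin m → ℝ := restr d h with hz'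
    have hsz' : spt z' ⊆ d := spt_restr _ _
    have hsz'card : (spt z').card ≤ k := le_trans (Finset.card_le_card hsz') hdcard
    have hdis1 : Disjoint (spt (restr T0 h)) (spt z') := by
      rw [Finset.disjoint_left]
      intro i hi1 hi2
      exact hRT0 i (hdsub (hsz' hi2)) (spt_restr T0 h hi1)
    have hcard1 : (spt (restr T0 h)).card + (spt z').card ≤ SN + SΔe + SΔ := by
      have h1 : (spt (restr T0 h)).card ≤ SN + SΔe :=
        le_trans (Finset.card_le_card (spt_restr T0 h)) hT0card
      have h2 : (spt z').card ≤ SΔ := le_trans hsz'card hkSΔ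
      omega
    have hro1 := ro_of_rip ⟨hδ0, hδ1, hrip⟩ hdis1 hcard1
    have hdis2 : Disjoint (spt (restr D1 h)) (spt z') := by
      refine Finset.disjoint_of_subset_left (spt_restr D1 h) ?_
      exact Finset.disjoint_of_subset_right hsz' hddis
    have hcard2 : (spt (restr D1 h)).card + (spt z').card ≤ SN + SΔe + SΔ := by
      have h1 : (spt (restr D1 h)).card ≤ SN :=
        le_trans (Finset.card_le_card (spt_restr D1 h)) (le_trans hD1card hkSN)
      have h2 : (spt z').card ≤ SΔ := le_trans hsz'card hkSΔ
      omega
    have hro2 := ro_of_rip ⟨hδ0, hδ1, hrip⟩ hdis2 hcard2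
    have humv : ∀ j, (A.mulVec u) j
        = (A.mulVec (restr T0 h)) j + (A.mulVec (restr D1 h)) j := by
      intro j
      have huu : u = restr T0 h + restr D1 h := funext fun i => by
        rw [hu_split i]; rfl
      rw [huu, Matrix.mulVec_add]; simp
    have hdotsplit : ∑ j, (A.mulVec u) j * (A.mulVec z') j
        = (∑ j, (A.mulVec (restr T0 h)) j * (A.mulVec z') j)
          + ∑ j, (A.mulVec (restr D1 h)) j * (A.mulVec z') j := by
      rw [← Finset.sum_add_distrib]
      exact Finset.sum_congr rfl fun j _ => by rw [humv j]; ring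
    rw [hdotsplit]
    have htri2 := abs_add_le (∑ j, (A.mulVec (restr T0 h)) j * (A.mulVec z') j)
      (∑ j, (A.mulVec (restr D1 h)) j * (A.mulVec z') j)
    have hz'nn : 0 ≤ norm2 z' := norm2_nonneg _
    have hfactor : δ * norm2 (restr T0 h) * norm2 z' + δ * norm2 (restr D1 h) * norm2 z'
        ≤ δ * (Real.sqrt 2 * q) * norm2 z' := by
      have := mul_le_mul_of_nonneg_left hsplitnorm (mul_nonneg hδ0 hz'nn)
      nlinarith
    linarith
  -- sum of block norms
  set Sg : ℝ := (Ds.map (fun d => norm2 (restr d h))).sum with hSg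
  have hSgnn : 0 ≤ Sg := by
    rw [hSg]
    apply List.sum_nonneg
    intro a ha
    obtain ⟨d, _, rfl⟩ := List.mem_map.mp ha
    exact norm2_nonneg _
  have hnormd : ∀ d : Finset (Fin m), norm2 (restr d h)
      = Real.sqrt (∑ i ∈ d, f i ^ 2) := by
    intro d
    unfold norm2
    congr 1
    calc ∑ i, (restr d h i) ^ 2
        = ∑ i, if i ∈ d then h i ^ 2 else 0 := by
          apply Finset.sum_congr rfl
          intro i _
          rw [restr]
          by_cases hic : i ∈ d
          · rw [if_pos hic, if_pos hic]
          · rw [if_neg hic, if_neg hic]; ring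
      _ = ∑ i ∈ d, h i ^ 2 := by
          rw [Finset.sum_ite_mem, Finset.univ_inter]
      _ = ∑ i ∈ d, f i ^ 2 :=
          Finset.sum_congr rfl fun i _ => by rw [hfdef]; simp [sq_abs]
  -- Sg ≤ q
  have hΔT01 : Δ ⊆ T01 := by
    intro i hi
    rw [hT01]
    apply Finset.mem_union_left
    rw [hT0def]
    exact Finset.mem_union_right T (Finset.mem_sdiff.mp hi).1
  have hrestrΔ : norm2 (restr Δ h) ≤ q := by
    rw [hq]
    apply norm2_le_of_sq_le (norm2_nonneg u)
    rw [sq_norm2]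
    apply Finset.sum_le_sum
    intro i _
    rw [restr, hu, restr]
    by_cases hic : i ∈ Δ
    · rw [if_pos hic, if_pos (hΔT01 hic)]
    · rw [if_neg hic]
      simpa using sq_nonneg (if i ∈ T01 then h i else 0)
  have hcsΔ : ∑ i ∈ Δ, f i ≤ Real.sqrt k * norm2 (restr Δ h) := by
    have hcs2 := Real.sum_mul_le_sqrt_mul_sqrt Δ (fun _ => (1:ℝ)) f
    have h1 : ∑ i ∈ Δ, (fun _ => (1:ℝ)) i * f i = ∑ i ∈ Δ, f i :=
      Finset.sum_congr rfl fun i _ => one_mul _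
    have h2 : ∑ i ∈ Δ, (fun _ => (1:ℝ)) i ^ 2 = (k:ℝ) := by
      rw [hk]
      simp
    have h3 : Real.sqrt (∑ i ∈ Δ, f i ^ 2) = norm2 (restr Δ h) := by
      rw [hnormd Δ]
    rw [h1, h2, h3] at hcs2
    exact hcs2
  have hSgeq : Sg = (Ds.map (fun d => Real.sqrt (∑ i ∈ d, f i ^ 2))).sum := by
    rw [hSg]
    congr 1
    exact List.map_congr_left fun d _ => hnormd d
  have hSg_le : Sg ≤ q := by
    rcases hbound with hbound | hDsnil
    swap
    · rw [hSg, hDsnil]; simpa using hqnn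
    rw [hSgeq]
    refine le_trans hbound ?_
    by_cases hk0 : k = 0
    · have : ∑ i ∈ R, f i = 0 := by rw [hk0R hk0]; simp
      rw [this, zero_div]
      exact hqnn
    have hkR : (0:ℝ) < (k:ℝ) := by exact_mod_cast Nat.pos_of_ne_zero hk0
    have hksqrt : (0:ℝ) < Real.sqrt k := Real.sqrt_pos.mpr hkR
    calc (∑ i ∈ R, f i) / Real.sqrt k
        ≤ (Real.sqrt k * norm2 (restr Δ h)) / Real.sqrt k := by
          refine div_le_div_of_nonneg_right ?_ (le_of_lt hksqrt)
          refine le_trans ?_ hcsΔ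
          exact le_trans (le_of_eq (Finset.sum_congr rfl fun i _ => by rw [hfdef])) hRcone
      _ = norm2 (restr Δ h) := mul_div_cancel_left₀ _ (ne_of_gt hksqrt)
      _ ≤ q := hrestrΔ
  -- RIP applied to u
  have hspt_u : (spt u).card ≤ SN + SΔe + SΔ := by
    refine le_trans (Finset.card_le_card ?_) hT01card
    rw [hu]
    exact spt_restr _ _
  have hripu := hrip u hspt_u
  have hAu_le : norm2 (A.mulVec u) ≤ 1.1 * q := by
    apply norm2_le_of_sq_le (by positivity)
    calc ∑ j, (A.mulVec u) j ^ 2 ≤ (1 + δ) * ∑ i, u i ^ 2 := hripu.2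
      _ ≤ (1.1 * q) ^ 2 := by rw [← hq2]; nlinarith [sq_nonneg q]
  have hdot1 : ∑ j, (A.mulVec u) j * (A.mulVec h) j ≤ (1.1 * q) * (2 * ε) := by
    have hcs2 := Real.sum_mul_le_sqrt_mul_sqrt Finset.univ (A.mulVec u) (A.mulVec h)
    have e1 : Real.sqrt (∑ j, (A.mulVec u) j ^ 2) = norm2 (A.mulVec u) := rfl
    have e2 : Real.sqrt (∑ j, (A.mulVec h) j ^ 2) = norm2 (A.mulVec h) := rfl
    rw [e1, e2] at hcs2
    calc ∑ j, (A.mulVec u) j * (A.mulVec h) j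
        ≤ norm2 (A.mulVec u) * norm2 (A.mulVec h) := hcs2
      _ ≤ (1.1 * q) * (2 * ε) := by
          apply mul_le_mul hAu_le htube (norm2_nonneg _) (by positivity)
  have hAh_split : ∀ j, (A.mulVec h) j = (A.mulVec u) j + (A.mulVec v) j := by
    intro j
    have huv : h = u + v := funext fun i => by rw [hdecomp i]; rfl
    rw [huv, Matrix.mulVec_add]; simp
  have hdot_decomp : ∑ j, (A.mulVec u) j * (A.mulVec h) j
      = (∑ j, (A.mulVec u) j ^ 2) + ∑ j, (A.mulVec u) j * (A.mulVec v) j := by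
    rw [← Finset.sum_add_distrib]
    exact Finset.sum_congr rfl fun j _ => by rw [hAh_split j]; ring
  have hdotv : ∑ j, (A.mulVec u) j * (A.mulVec v) j
      = (Ds.map (fun d => ∑ j, (A.mulVec u) j * (A.mulVec (restr d h)) j)).sum := by
    have hveq : v = fun i => ((Ds.map (fun d => restr d h)).map (fun g => g i)).sum := by
      funext i
      rw [hvW i, List.map_map]
      rfl
    rw [hveq, dot_list A u (Ds.map (fun d => restr d h)), List.map_map]
    rfl
  have habsdotv : |∑ j, (A.mulVec u) j * (A.mulVec v) j| ≤ δ * (Real.sqrt 2 * q) * Sg := by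
    rw [hdotv]
    refine le_trans (list_abs_sum_le _) ?_
    rw [List.map_map]
    have h1 : (Ds.map ((fun a => |a|) ∘
          (fun d => ∑ j, (A.mulVec u) j * (A.mulVec (restr d h)) j))).sum
        ≤ (Ds.map (fun d => δ * (Real.sqrt 2 * q) * norm2 (restr d h))).sum := by
      apply List.sum_le_sum
      intro d hd
      exact hblock d hd
    refine le_trans h1 ?_
    rw [hSg, ← List.sum_map_mul_left]
  -- the master inequality
  have hmaster : (1 - δ) * q ^ 2 ≤ (1.1 * q) * (2 * ε) + δ * (Real.sqrt 2 * q) * q := by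
    have h1 : (1 - δ) * q ^ 2 ≤ ∑ j, (A.mulVec u) j ^ 2 := by
      rw [hq2]; exact hripu.1
    have h3 : -(∑ j, (A.mulVec u) j * (A.mulVec v) j) ≤ δ * (Real.sqrt 2 * q) * Sg :=
      le_trans (neg_le_abs _) habsdotv
    have h4 : δ * (Real.sqrt 2 * q) * Sg ≤ δ * (Real.sqrt 2 * q) * q := by
      apply mul_le_mul_of_nonneg_left hSg_le
      positivity
    calc (1 - δ) * q ^ 2 ≤ ∑ j, (A.mulVec u) j ^ 2 := h1
      _ = (∑ j, (A.mulVec u) j * (A.mulVec h) j)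
          + (-(∑ j, (A.mulVec u) j * (A.mulVec v) j)) := by
            rw [hdot_decomp]; ring
      _ ≤ (1.1 * q) * (2 * ε) + δ * (Real.sqrt 2 * q) * Sg := add_le_add hdot1 h3
      _ ≤ (1.1 * q) * (2 * ε) + δ * (Real.sqrt 2 * q) * q := add_le_add_right h4 _
  have hqbound : q ≤ 4.5 * ε := qbound_helper h2u h2nn hδ0 hδu hqnn hε0 hmaster
  -- sum of squares of v
  have hvsq : ∑ i, v i ^ 2 ≤ Sg ^ 2 := by
    have h1 : ∀ i, v i ^ 2 = (Ds.map (fun d => if i ∈ d then h i ^ 2 else 0)).sum := by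
      intro i
      rw [hcover (h i ^ 2) i, hvdef i]
      by_cases hid : i ∈ R \ D1
      · rw [if_pos hid, if_pos hid]
      · rw [if_neg hid, if_neg hid]; ring
    calc ∑ i, v i ^ 2
        = ∑ i, (Ds.map (fun d => if i ∈ d then h i ^ 2 else 0)).sum :=
          Finset.sum_congr rfl fun i _ => h1 i
      _ = (Ds.map (fun d => ∑ i, if i ∈ d then h i ^ 2 else 0)).sum := by
          rw [finset_sum_list_sum]
      _ = (Ds.map (fun d => norm2 (restr d h) ^ 2)).sum := by
          refine congrArg List.sum ?_
          apply List.map_congr_left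
          intro d _
          rw [sq_norm2]
          apply Finset.sum_congr rfl
          intro i _
          rw [restr]
          by_cases hic : i ∈ d
          · rw [if_pos hic, if_pos hic]
          · rw [if_neg hic, if_neg hic]
            ring
      _ ≤ Sg ^ 2 := by
          rw [hSg]
          have h2 := list_sum_sq_le (Ds.map (fun d => norm2 (restr d h)))
            (fun a ha => by
              obtain ⟨d, _, rfl⟩ := List.mem_map.mp ha
              exact norm2_nonneg _)
          rw [List.map_map] at h2
          exact le_trans (le_of_eq (congrArg List.sum
            (List.map_congr_left fun d _ => rfl))) h2
  -- cross terms vanish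
  have hcross : ∀ i, u i * v i = 0 := by
    intro i
    by_cases hiT : i ∈ T01
    · have hv0 : v i = 0 := by
        rw [hv]
        simp only [hu, restr, if_pos hiT]
        ring
      rw [hv0, mul_zero]
    · have hu0 : u i = 0 := by rw [hu, restr, if_neg hiT]
      rw [hu0, zero_mul]
  have hsumsplit : ∑ i, h i ^ 2 = (∑ i, u i ^ 2) + ∑ i, v i ^ 2 := by
    calc ∑ i, h i ^ 2 = ∑ i, (u i + v i) ^ 2 :=
          Finset.sum_congr rfl fun i _ => by rw [hdecomp i]
      _ = (∑ i, u i ^ 2) + (∑ i, v i ^ 2) + 2 * ∑ i, u i * v i := norm2_expand_add u v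
      _ = (∑ i, u i ^ 2) + ∑ i, v i ^ 2 := by
          rw [Finset.sum_eq_zero fun i _ => hcross i]; ring
  have ha : h i0 ^ 2 ≤ q ^ 2 + Sg ^ 2 := by
    calc h i0 ^ 2 ≤ ∑ i, h i ^ 2 :=
          Finset.single_le_sum (f := fun i => h i ^ 2) (fun i _ => sq_nonneg _)
            (Finset.mem_univ i0)
      _ = (∑ i, u i ^ 2) + ∑ i, v i ^ 2 := hsumsplit
      _ ≤ (∑ i, u i ^ 2) + Sg ^ 2 := add_le_add_right hvsq _
      _ = q ^ 2 + Sg ^ 2 := by rw [hq2]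
  have hfin : |h i0| ≤ 8.79 * ε := final_helper ha hSg_le hSgnn hqbound hqnn hε0
  rw [hdef] at hfin
  exact hfin

end ModAux

/-- detection and deletion conditions for modified-CS (Lemma 2). -/
theorem modCS_detect_delete {n m : ℕ} (A : Matrix (Fin n) (Fin m) ℝ)
    (x : Fin m → ℝ) (w : Fin n → ℝ) (ε δ α b1 : ℝ) (T : Finset (Fin m))
    (SN SΔe SΔ : ℕ)
    (hw : norm2 w ≤ ε)
    (hN : (spt x).card ≤ SN)
    (hΔe : (T \ spt x).card ≤ SΔe)
    (hΔ : (spt x \ T).card ≤ SΔ)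
    (hδ : δ < (Real.sqrt 2 - 1) / 2)
    (hRIP : RIPBound A (SN + SΔe + SΔ) δ)
    (xhat : Fin m → ℝ)
    (hxhat : ModCS A (fun j => (A.mulVec x) j + w j) ε T xhat)
    (hα : 0 ≤ α) :
    (b1 > α + 8.79 * ε → ∀ i ∈ spt x, b1 ≤ |x i| → α < |xhat i|) ∧
    (α ≥ 8.79 * ε → ∀ i, i ∉ spt x → |xhat i| ≤ α) := by
  have hkey : ∀ i, |xhat i - x i| ≤ 8.79 * ε :=
    ModAux.modcs_linf A x w ε δ T SN SΔe SΔ hw hN hΔe hΔ hδ hRIP xhat hxhat.1 hxhat.2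
  constructor
  · intro hb i hiN hb1
    have h1 := hkey i
    have h2 : |x i| ≤ |xhat i| + |xhat i - x i| := by
      have h3 : |x i| = |xhat i + (x i - xhat i)| := by ring_nf
      rw [h3]
      refine le_trans (abs_add_le _ _) ?_
      rw [abs_sub_comm]
    linarith
  · intro hge i hiN
    have hx0 : x i = 0 := by
      by_contra hc
      exact hiN (by simp [spt, hc])
    have h1 := hkey i
    rw [hx0, sub_zero] at h1
    linarith
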